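/- Let λ be a partition of d with at most n parts, c ≥ 0 an integer, Ω := {P ⊆ [n] : |P| = c}, Σ_λ := {σ ∈ Σ_n : σλ = λ} the stabilizer of λ (acting on compositions by σλ = (λ_{σ^{-1}1},…,λ_{σ^{-1}n})), and Ω_λ := {P ∈ Ω : λ + ε_P is a partition}, where ε_P := Σ_{p∈P} ε_p with ε_p the p-th unit vector. Writing Ω_λ = {P_1 < P_2 < ⋯ < P_t} in the lexicographic order on c-subsets (comparing increasing lists of elements), then: (i) each P_r is the lexicographically minimal element of its Σ_λ-orbit; (ii) Ω is the disjoint union of the orbits Σ_λ·P_1, …, Σ_λ·P_t. -/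

import Mathlib

/-!
STATEMENT 12: orbits of the stabiliser `Σ_λ` on `c`-element subsets of `[n]`
(Lemma `LOrb`).
-/

open scoped Classical

/-- `σλ = (λ_{σ⁻¹ 1}, …, λ_{σ⁻¹ n})`: the place-permutation action of `Σ_n` on
compositions with `n` parts. -/
def permAct {n : ℕ} (σ : Equiv.Perm (Fin n)) (lam : Fin n → ℕ) : Fin n → ℕ :=
  fun r => lam (σ⁻¹ r)

/-- `λ` is a partition (with at most `n` parts): its parts weakly decrease. -/
def IsPtn {n : ℕ} (lam : Fin n → ℕ) : Prop :=
  ∀ r s : Fin n, r ≤ s → lam s ≤ lam r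

/-- `ε_P = Σ_{p ∈ P} ε_p`: the indicator vector of a subset `P ⊆ [n]`. -/
def epsOf {n : ℕ} (P : Finset (Fin n)) : Fin n → ℕ :=
  fun r => if r ∈ P then 1 else 0

/-- The lexicographic (total) order on `c`-element subsets of `[n]`:
`P < Q` iff the increasing list of elements of `P` is lexicographically smaller than
that of `Q`. -/
def OmLt {n : ℕ} (P Q : Finset (Fin n)) : Prop :=
  List.Lex (· < ·) (P.sort (· ≤ ·)) (Q.sort (· ≤ ·))

/-- within each fiber of `lam`, `P` is downward closed -/
def Good {n : ℕ} (lam : Fin n → ℕ) (P : Finset (Fin n)) : Prop :=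
  ∀ r s : Fin n, r ≤ s → lam r = lam s → s ∈ P → r ∈ P

section A
variable {n : ℕ}

lemma permAct_eq_iff {lam : Fin n → ℕ} {σ : Equiv.Perm (Fin n)} :
    permAct σ lam = lam ↔ ∀ x, lam (σ x) = lam x := by
  constructor
  · intro h x
    have := congrFun h (σ x)
    simpa [permAct] using this.symm
  · intro h
    funext r
    have := h (σ⁻¹ r)
    simpa [permAct] using this.symm

lemma cnt_image {lam : Fin n → ℕ} {σ : Equiv.Perm (Fin n)} (hσ : ∀ x, lam (σ x) = lam x)
    (S : Finset (Fin n)) (v : ℕ) :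
    ((S.image σ).filter fun x => lam x = v).card = (S.filter fun x => lam x = v).card := by
  rw [Finset.filter_image, Finset.card_image_of_injective _ σ.injective]
  congr 1
  apply Finset.filter_congr
  intro x _
  simp [hσ x]

lemma dc_comparable {S T U : Finset (Fin n)}
    (hS : S ⊆ U) (hT : T ⊆ U)
    (hdS : ∀ r s : Fin n, r ∈ U → s ∈ U → r ≤ s → s ∈ S → r ∈ S)
    (hdT : ∀ r s : Fin n, r ∈ U → s ∈ U → r ≤ s → s ∈ T → r ∈ T) :
    S ⊆ T ∨ T ⊆ S := by
  by_contra h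
  push_neg at h
  obtain ⟨hST, hTS⟩ := h
  obtain ⟨x, hxS, hxT⟩ := Finset.not_subset.mp hST
  obtain ⟨y, hyT, hyS⟩ := Finset.not_subset.mp hTS
  rcases le_total x y with hxy | hyx
  · exact hxT (hdT x y (hS hxS) (hT hyT) hxy hyT)
  · exact hyS (hdS y x (hT hyT) (hS hxS) hyx hxS)

lemma good_unique {lam : Fin n → ℕ} {P P' : Finset (Fin n)}
    (hP : Good lam P) (hP' : Good lam P')
    (hcnt : ∀ v, (P.filter fun x => lam x = v).card = (P'.filter fun x => lam x = v).card) :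
    P = P' := by
  have key : ∀ v, P.filter (fun x => lam x = v) = P'.filter (fun x => lam x = v) := by
    intro v
    have hcomp := dc_comparable (U := Finset.univ.filter fun x => lam x = v)
      (S := P.filter fun x => lam x = v) (T := P'.filter fun x => lam x = v)
      (by intro x hx; simp [Finset.mem_filter.mp hx |>.2])
      (by intro x hx; simp [Finset.mem_filter.mp hx |>.2])
      (by
        intro r s hr hs hrs hsS
        have h1 := Finset.mem_filter.mp hr
        have h2 := Finset.mem_filter.mp hs
        have h3 := Finset.mem_filter.mp hsS
        exact Finset.mem_filter.mpr ⟨hP r s hrs (h1.2.trans h2.2.symm) h3.1, h1.2⟩)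
      (by
        intro r s hr hs hrs hsS
        have h1 := Finset.mem_filter.mp hr
        have h2 := Finset.mem_filter.mp hs
        have h3 := Finset.mem_filter.mp hsS
        exact Finset.mem_filter.mpr ⟨hP' r s hrs (h1.2.trans h2.2.symm) h3.1, h1.2⟩)
    rcases hcomp with h | h
    · exact Finset.eq_of_subset_of_card_le h (le_of_eq (hcnt v).symm)
    · exact (Finset.eq_of_subset_of_card_le h (le_of_eq (hcnt v))).symm
  ext a
  constructor
  · intro ha
    have : a ∈ P.filter (fun x => lam x = lam a) := Finset.mem_filter.mpr ⟨ha, rfl⟩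
    rw [key (lam a)] at this
    exact (Finset.mem_filter.mp this).1
  · intro ha
    have : a ∈ P'.filter (fun x => lam x = lam a) := Finset.mem_filter.mpr ⟨ha, rfl⟩
    rw [← key (lam a)] at this
    exact (Finset.mem_filter.mp this).1

lemma good_of_isptn {lam : Fin n → ℕ} {P : Finset (Fin n)}
    (h : IsPtn fun r => lam r + epsOf P r) : Good lam P := by
  intro r s hrs hv hsP
  by_contra hrP
  have := h r s hrs
  simp [epsOf, hsP, hrP] at this
  omega

lemma isptn_of_good {lam : Fin n → ℕ} (hlam : IsPtn lam) {P : Finset (Fin n)}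
    (h : Good lam P) : IsPtn fun r => lam r + epsOf P r := by
  intro r s hrs
  have h1 := hlam r s hrs
  by_cases hs : s ∈ P
  · by_cases hr : r ∈ P
    · simp only [epsOf, if_pos hs, if_pos hr]; omega
    · have h2 : lam r ≠ lam s := fun he => hr (h r s hrs he hs)
      simp only [epsOf, if_pos hs, if_neg hr]; omega
  · by_cases hr : r ∈ P
    · simp only [epsOf, if_neg hs, if_pos hr]; omega
    · simp only [epsOf, if_neg hs, if_neg hr]; omega

end A

section B
variable {n : ℕ}

lemma good_exists {lam : Fin n → ℕ} (N : ℕ) :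
    ∀ Q : Finset (Fin n), (∑ x ∈ Q, (x : ℕ)) ≤ N →
      ∃ P : Finset (Fin n), Good lam P ∧
        ∃ σ : Equiv.Perm (Fin n), (∀ x, lam (σ x) = lam x) ∧ P.image σ = Q := by
  induction N using Nat.strong_induction_on with
  | _ N ih =>
    intro Q hQ
    by_cases hG : Good lam Q
    · exact ⟨Q, hG, 1, fun x => rfl, by simp⟩
    · unfold Good at hG
      push_neg at hG
      obtain ⟨r, s, hrs, hv, hsQ, hrQ⟩ := hG
      have hne : r ≠ s := fun h => hrQ (h ▸ hsQ)
      have hlt : (r : ℕ) < (s : ℕ) := lt_of_le_of_ne hrs (fun h => hne (Fin.ext h))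
      set τ := Equiv.swap r s with hτ
      have hτlam : ∀ x, lam (τ x) = lam x := by
        intro x
        rcases eq_or_ne x r with rfl | hxr
        · simp [hτ, Equiv.swap_apply_left, hv]
        · rcases eq_or_ne x s with rfl | hxs
          · simp [hτ, Equiv.swap_apply_right, hv]
          · simp [hτ, Equiv.swap_apply_of_ne_of_ne hxr hxs]
      have hsum : ∑ x ∈ Q.image τ, (x : ℕ) < ∑ x ∈ Q, (x : ℕ) := by
        rw [Finset.sum_image (fun a _ b _ h => τ.injective h)]
        have h1 : ∑ y ∈ Q, ((τ y : Fin n) : ℕ)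
            = ∑ y ∈ Q.erase s, ((τ y : Fin n) : ℕ) + ((τ s : Fin n) : ℕ) :=
          (Finset.sum_erase_add _ _ hsQ).symm
        have h2 : ∑ y ∈ Q.erase s, ((τ y : Fin n) : ℕ) = ∑ y ∈ Q.erase s, (y : ℕ) := by
          apply Finset.sum_congr rfl
          intro y hy
          have hys : y ≠ s := Finset.ne_of_mem_erase hy
          have hyr : y ≠ r := fun h => hrQ (h ▸ Finset.mem_of_mem_erase hy)
          rw [hτ, Equiv.swap_apply_of_ne_of_ne hyr hys]
        have h3 : ∑ y ∈ Q, (y : ℕ) = ∑ y ∈ Q.erase s, (y : ℕ) + (s : ℕ) :=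
          (Finset.sum_erase_add _ _ hsQ).symm
        rw [h1, h2]
        have h4 : (τ s : Fin n) = r := by rw [hτ, Equiv.swap_apply_right]
        rw [h4]
        omega
      obtain ⟨P, hPg, σ', hσ', himg⟩ :=
        ih (∑ x ∈ Q.image τ, (x : ℕ)) (lt_of_lt_of_le hsum hQ) (Q.image τ) le_rfl
      refine ⟨P, hPg, τ * σ', ?_, ?_⟩
      · intro x
        rw [Equiv.Perm.mul_apply, hτlam, hσ' x]
      · have hcomp : P.image ⇑(τ * σ') = (P.image ⇑σ').image ⇑τ := by
          rw [Finset.image_image]; rfl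
        rw [hcomp, himg, Finset.image_image]
        have : ⇑τ ∘ ⇑τ = id := by
          funext x; simp [hτ]
        rw [this, Finset.image_id]

lemma count_le_fiber {lam : Fin n → ℕ} {P : Finset (Fin n)} (hP : Good lam P)
    {σ : Equiv.Perm (Fin n)} (hσ : ∀ x, lam (σ x) = lam x) (t : Fin n) (v : ℕ) :
    ((P.image σ).filter fun x => x ≤ t ∧ lam x = v).card
      ≤ (P.filter fun x => x ≤ t ∧ lam x = v).card := by
  set U : Finset (Fin n) := Finset.univ.filter fun x => lam x = v with hU
  set S : Finset (Fin n) := P.filter fun x => lam x = v with hS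
  set T : Finset (Fin n) := U.filter fun x => x ≤ t with hT
  have hcomp : S ⊆ T ∨ T ⊆ S := by
    apply dc_comparable (U := U)
    · intro x hx
      simp [hU, (Finset.mem_filter.mp hx).2]
    · exact Finset.filter_subset _ _
    · intro a b ha hb hab hbS
      have h1 := Finset.mem_filter.mp ha
      have h2 := Finset.mem_filter.mp hb
      have h3 := Finset.mem_filter.mp hbS
      exact Finset.mem_filter.mpr ⟨hP a b hab (h1.2.trans h2.2.symm) h3.1, h1.2⟩
    · intro a b ha hb hab hbT
      exact Finset.mem_filter.mpr ⟨ha, hab.trans (Finset.mem_filter.mp hbT).2⟩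
  rcases hcomp with h | h
  · -- all of P ∩ fiber is ≤ t
    have hPle : ∀ x ∈ P, lam x = v → x ≤ t := by
      intro x hx hxv
      exact (Finset.mem_filter.mp (h (Finset.mem_filter.mpr ⟨hx, hxv⟩))).2
    have e1 : (P.filter fun x => x ≤ t ∧ lam x = v) = P.filter fun x => lam x = v := by
      ext x
      simp only [Finset.mem_filter]
      exact ⟨fun ⟨h1, _, h3⟩ => ⟨h1, h3⟩, fun ⟨h1, h3⟩ => ⟨h1, hPle x h1 h3, h3⟩⟩
    rw [e1, ← cnt_image hσ P v]
    apply Finset.card_le_card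
    intro x hx
    have := Finset.mem_filter.mp hx
    exact Finset.mem_filter.mpr ⟨this.1, this.2.2⟩
  · -- everything ≤ t in the fiber is in P
    have h5 : ((P.image σ).filter fun x => x ≤ t ∧ lam x = v) ⊆ T := by
      intro x hx
      have := Finset.mem_filter.mp hx
      exact Finset.mem_filter.mpr ⟨by simp [hU, this.2.2], this.2.1⟩
    have h6 : T ⊆ P.filter fun x => x ≤ t ∧ lam x = v := by
      intro x hx
      have h7 := Finset.mem_filter.mp hx
      have h8 := Finset.mem_filter.mp (h hx)
      have h9 : lam x = v := (Finset.mem_filter.mp h7.1).2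
      exact Finset.mem_filter.mpr ⟨h8.1, h7.2, h9⟩
    exact le_trans (Finset.card_le_card h5) (Finset.card_le_card h6)

lemma count_le {lam : Fin n → ℕ} {P : Finset (Fin n)} (hP : Good lam P)
    {σ : Equiv.Perm (Fin n)} (hσ : ∀ x, lam (σ x) = lam x) (t : Fin n) :
    ((P.image σ).filter fun x => x ≤ t).card ≤ (P.filter fun x => x ≤ t).card := by
  rw [Finset.card_eq_sum_card_fiberwise
    (f := lam) (t := Finset.univ.image lam)
    (fun x _ => Finset.mem_image_of_mem lam (Finset.mem_univ x)),
    Finset.card_eq_sum_card_fiberwise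
    (f := lam) (t := Finset.univ.image lam)
    (fun x _ => Finset.mem_image_of_mem lam (Finset.mem_univ x))]
  apply Finset.sum_le_sum
  intro v _
  rw [Finset.filter_filter, Finset.filter_filter]
  exact count_le_fiber hP hσ t v

end B

section C
variable {n : ℕ}

lemma lex_of_count : ∀ {l₁ l₂ : List (Fin n)}, l₁.length = l₂.length →
    l₁.Pairwise (· < ·) → l₂.Pairwise (· < ·) →
    (∀ t : Fin n, l₂.countP (fun x => x ≤ t) ≤ l₁.countP (fun x => x ≤ t)) →
    l₁ ≠ l₂ → List.Lex (· < ·) l₁ l₂ := by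
  intro l₁
  induction l₁ with
  | nil =>
    intro l₂ _ _ _ _ hne
    cases l₂ with
    | nil => exact absurd rfl hne
    | cons b l => exact List.Lex.nil
  | cons a l₁' ih =>
    intro l₂ hlen h₁ h₂ hc hne
    cases l₂ with
    | nil => exact absurd hlen (by simp)
    | cons b l₂' =>
      obtain ⟨ha1, ha2⟩ := List.pairwise_cons.mp h₁
      obtain ⟨hb1, hb2⟩ := List.pairwise_cons.mp h₂
      have hab : a ≤ b := by
        have h := hc b
        have hpos : 0 < (b :: l₂').countP (fun x => x ≤ b) := by
          simp [List.countP_cons, le_refl]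
        have hpos2 : 0 < (a :: l₁').countP (fun x => x ≤ b) := lt_of_lt_of_le hpos h
        obtain ⟨x, hx, hxb⟩ := List.countP_pos_iff.mp hpos2
        have hax : a ≤ x := by
          rcases List.mem_cons.mp hx with h' | hx'
          · exact h'.ge
          · exact le_of_lt (ha1 x hx')
        exact hax.trans (by simpa using hxb)
      rcases lt_or_eq_of_le hab with h | h
      · exact List.Lex.rel h
      · subst h
        apply List.Lex.cons
        apply ih (by simpa using hlen) ha2 hb2 ?_ (fun he => hne (by rw [he]))
        intro t
        have h := hc t
        rcases le_or_gt a t with hat | hta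
        · simp only [List.countP_cons, decide_eq_true_eq, hat, if_pos] at h
          omega
        · have hz : l₂'.countP (fun x => x ≤ t) = 0 := by
            apply List.countP_eq_zero.mpr
            intro x hx
            simp only [decide_eq_true_eq]
            exact fun hxt => absurd (lt_of_le_of_lt hxt hta) (not_lt.mpr (le_of_lt (hb1 x hx)))
          omega

lemma countP_sort (s : Finset (Fin n)) (q : Fin n → Prop) [DecidablePred q] :
    (s.sort (· ≤ ·)).countP (fun x => decide (q x)) = (s.filter q).card := by
  have h := List.Perm.countP_eq (fun x => decide (q x)) (Finset.sort_perm_toList s (· ≤ ·))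
  rw [h]
  rw [Finset.card_filter]
  rw [← Multiset.coe_countP]
  rw [Finset.toList]
  simp [Multiset.countP_eq_card_filter, Finset.filter]

end C

lemma sort_inj {n : ℕ} {P Q : Finset (Fin n)}
    (h : P.sort (· ≤ ·) = Q.sort (· ≤ ·)) : P = Q := by
  ext a
  rw [← Finset.mem_sort (· ≤ ·), h, Finset.mem_sort]

/-- **Lemma on `Σ_λ`-orbits.**
Let `λ` be a partition of `d` with at most `n` parts, `c ≥ 0`,
`Ω = {P ⊆ [n] : |P| = c}`, `Σ_λ ≤ Σ_n` the stabiliser of `λ`, and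
`Ω_λ = {P ∈ Ω : λ + ε_P is a partition}`.  Then:
(i) every `P ∈ Ω_λ` is the lexicographically minimal element of its `Σ_λ`-orbit;
(ii) `Ω` is the disjoint union of the `Σ_λ`-orbits of the elements of `Ω_λ`, i.e.
every `Q ∈ Ω` lies in the `Σ_λ`-orbit of exactly one `P ∈ Ω_λ`. -/
theorem stmt12 (n d c : ℕ) (lam : Fin n → ℕ)
    (hlam : IsPtn lam) (hsize : ∑ r, lam r = d) :
    -- (i)
    (∀ P : Finset (Fin n), P.card = c → IsPtn (fun r => lam r + epsOf P r) →
      ∀ σ : Equiv.Perm (Fin n), permAct σ lam = lam →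
        P.image σ ≠ P → OmLt P (P.image σ)) ∧
    -- (ii)
    (∀ Q : Finset (Fin n), Q.card = c →
      ∃! P : Finset (Fin n),
        (P.card = c ∧ IsPtn (fun r => lam r + epsOf P r)) ∧
        ∃ σ : Equiv.Perm (Fin n), permAct σ lam = lam ∧ P.image σ = Q) := by
  constructor
  · intro P _ hptn σ hfix hne
    have hσ := permAct_eq_iff.mp hfix
    have hG := good_of_isptn hptn
    unfold OmLt
    apply lex_of_count
    · simp [Finset.card_image_of_injective _ σ.injective]
    · exact (Finset.sortedLT_sort P).pairwise
    · exact (Finset.sortedLT_sort _).pairwise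
    · intro t
      rw [countP_sort P (fun x => x ≤ t), countP_sort (P.image σ) (fun x => x ≤ t)]
      exact count_le hG hσ t
    · intro h
      exact hne (sort_inj h.symm)
  · intro Q hQc
    obtain ⟨P, hPg, σ, hσ, himg⟩ := good_exists (∑ x ∈ Q, (x : ℕ)) Q le_rfl
    have hPc : P.card = c := by
      rw [← hQc, ← himg, Finset.card_image_of_injective _ σ.injective]
    refine ⟨P, ⟨⟨hPc, isptn_of_good hlam hPg⟩, σ, permAct_eq_iff.mpr hσ, himg⟩, ?_⟩
    rintro P' ⟨⟨hP'c, hP'ptn⟩, σ', hfix', himg'⟩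
    have hσ' := permAct_eq_iff.mp hfix'
    apply good_unique (good_of_isptn hP'ptn) hPg
    intro v
    calc (P'.filter fun x => lam x = v).card
        = ((P'.image σ').filter fun x => lam x = v).card := (cnt_image hσ' P' v).symm
      _ = ((P.image σ).filter fun x => lam x = v).card := by rw [himg', himg]
      _ = (P.filter fun x => lam x = v).card := cnt_image hσ P v
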